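/- arXiv:2001.04045 — 3 statements merged into one kernel-verified Lean document; each statement's English description precedes it below -/
import Mathlib

section
/- For every real p ≥ 0, lim_{n→∞} ( ∑_{j=0}^{n} C(2n, j) · (1+p)^j )^{1/(2n)} = 2·√(1+p), where C(m, k) denotes the binomial coefficient. Moreover 2√(1+p) ≤ 2+p with equality if and only if p = 0. -/
open Finset Filter

lemma aux_tendsto (b c : ℝ) (hb : 0 < b) (hc : 0 ≤ c) :
    Tendsto (fun n : ℕ => (b * n + c) ^ ((1:ℝ)/(2*n))) atTop (nhds 1) := by
  have h1 : Tendsto (fun n : ℕ => (b * n + c : ℝ)) atTop atTop := by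
    apply tendsto_atTop_add_const_right
    exact (tendsto_natCast_atTop_atTop).const_mul_atTop hb
  have hlog : Tendsto (fun x : ℝ => Real.log x / x) atTop (nhds 0) :=
    Real.isLittleO_log_id_atTop.tendsto_div_nhds_zero
  have h2 : Tendsto (fun n : ℕ => Real.log (b*n+c) / (b*n+c)) atTop (nhds 0) :=
    hlog.comp h1
  have h3 : Tendsto (fun n : ℕ => (b*n+c) / (2*n)) atTop (nhds (b/2)) := by
    have : Tendsto (fun n : ℕ => b/2 + (c/2) * (1/(n:ℝ))) atTop (nhds (b/2 + (c/2) * 0)) :=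
      tendsto_const_nhds.add (tendsto_const_nhds.mul tendsto_one_div_atTop_nhds_zero_nat)
    rw [mul_zero, add_zero] at this
    refine this.congr' ?_
    filter_upwards [eventually_ge_atTop 1] with n hn
    have hn' : (n:ℝ) ≠ 0 := by positivity
    field_simp
  have h4 : Tendsto (fun n : ℕ => Real.log (b*n+c) * ((1:ℝ)/(2*n))) atTop (nhds 0) := by
    have := h2.mul h3
    rw [zero_mul] at this
    refine this.congr' ?_
    filter_upwards [eventually_ge_atTop 1] with n hn
    have hx : (0:ℝ) < b*n+c := by
      have : (1:ℝ) ≤ (n:ℝ) := by exact_mod_cast hn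
      nlinarith
    field_simp
  have := (Real.continuous_exp.tendsto 0).comp h4
  rw [Real.exp_zero] at this
  refine this.congr' ?_
  filter_upwards [eventually_ge_atTop 1] with n hn
  have hx : (0:ℝ) < b*n+c := by
    have : (1:ℝ) ≤ (n:ℝ) := by exact_mod_cast hn
    nlinarith
  simp [Real.rpow_def_of_pos hx, Function.comp, mul_comm]

/-- The exponential growth rate of the lower-half weighted binomial sum:
`(∑_{j=0}^n C(2n,j)(1+p)^j)^{1/(2n)} → 2√(1+p)` as `n → ∞`, and
`2√(1+p) ≤ 2+p` with equality iff `p = 0`. -/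
theorem weighted_binomial_tail_growth_rate (p : ℝ) (hp : 0 ≤ p) :
    Tendsto
      (fun n : ℕ =>
        (∑ j ∈ range (n + 1), ((2 * n).choose j : ℝ) * (1 + p) ^ j)
          ^ ((1 : ℝ) / (2 * (n : ℝ))))
      atTop (nhds (2 * Real.sqrt (1 + p))) ∧
    2 * Real.sqrt (1 + p) ≤ 2 + p ∧
    (2 * Real.sqrt (1 + p) = 2 + p ↔ p = 0) := by
  set q := Real.sqrt (1 + p) with hqdef
  have h1p : (0:ℝ) ≤ 1 + p := by linarith
  have hq0 : 0 ≤ q := Real.sqrt_nonneg _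
  have hqsq : q ^ 2 = 1 + p := Real.sq_sqrt h1p
  have hq1 : 1 ≤ q := by nlinarith
  refine ⟨?_, by nlinarith [sq_nonneg (q - 1)], ?_, ?_⟩
  · -- main limit
    have hsqrt4 : ((4 * (1+p)):ℝ) ^ ((1:ℝ)/2) = 2 * q := by
      rw [← Real.sqrt_eq_rpow, show (4:ℝ)*(1+p) = (2*q)^2 by nlinarith,
        Real.sqrt_sq (by linarith)]
    have hpow_eq : ∀ n : ℕ, 1 ≤ n →
        (((4*(1+p))^n : ℝ)) ^ ((1:ℝ)/(2*n)) = 2 * q := by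
      intro n hn
      have hn' : (n:ℝ) ≠ 0 := by positivity
      rw [← Real.rpow_natCast (4*(1+p)) n, ← Real.rpow_mul (by linarith),
        show (n:ℝ) * ((1:ℝ)/(2*n)) = 1/2 by field_simp, hsqrt4]
    -- lower and upper sequences
    have hLtend : Tendsto (fun n : ℕ => (((4*(1+p))^n : ℝ) / (2*n+1)) ^ ((1:ℝ)/(2*n)))
        atTop (nhds (2*q)) := by
      have haux := aux_tendsto 2 1 (by norm_num) (by norm_num)
      have : Tendsto (fun n : ℕ => (2*q) / ((2*(n:ℝ)+1) ^ ((1:ℝ)/(2*n)))) atTop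
          (nhds ((2*q)/1)) := tendsto_const_nhds.div haux one_ne_zero
      rw [div_one] at this
      refine this.congr' ?_
      filter_upwards [eventually_ge_atTop 1] with n hn
      rw [Real.div_rpow (by positivity) (by positivity), hpow_eq n hn]
    have hUtend : Tendsto (fun n : ℕ => (((n:ℝ)+1) * ((4*(1+p))^n : ℝ)) ^ ((1:ℝ)/(2*n)))
        atTop (nhds (2*q)) := by
      have haux := aux_tendsto 1 1 (by norm_num) (by norm_num)
      simp only [one_mul] at haux
      have : Tendsto (fun n : ℕ => (((n:ℝ)+1) ^ ((1:ℝ)/(2*n))) * (2*q)) atTop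
          (nhds (1 * (2*q))) := haux.mul tendsto_const_nhds
      rw [one_mul] at this
      refine this.congr' ?_
      filter_upwards [eventually_ge_atTop 1] with n hn
      rw [Real.mul_rpow (by positivity) (by positivity), hpow_eq n hn]
    refine tendsto_of_tendsto_of_tendsto_of_le_of_le' hLtend hUtend ?_ ?_
    · -- lower bound
      filter_upwards [eventually_ge_atTop 1] with n hn
      apply Real.rpow_le_rpow (by positivity) ?_ (by positivity)
      have hnat : (4:ℕ) ^ n ≤ (2 * n + 1) * (2 * n).choose n :=
        Nat.four_pow_le_two_mul_add_one_mul_central_binom n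
      have hnatR : (4:ℝ) ^ n ≤ (2 * (n:ℝ) + 1) * ((2 * n).choose n : ℝ) := by
        exact_mod_cast hnat
      have hmem : ((2 * n).choose n : ℝ) * (1+p)^n ≤
          ∑ j ∈ range (n + 1), ((2 * n).choose j : ℝ) * (1 + p) ^ j :=
        single_le_sum (f := fun j => ((2 * n).choose j : ℝ) * (1 + p) ^ j)
          (fun j _ => by positivity) (self_mem_range_succ n)
      rw [div_le_iff₀ (by positivity)]
      calc (4*(1+p))^n = (4:ℝ)^n * (1+p)^n := by rw [mul_pow]
        _ ≤ ((2 * (n:ℝ) + 1) * ((2 * n).choose n : ℝ)) * (1+p)^n := by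
            apply mul_le_mul_of_nonneg_right hnatR (by positivity)
        _ = (((2 * n).choose n : ℝ) * (1+p)^n) * (2 * (n:ℝ) + 1) := by ring
        _ ≤ (∑ j ∈ range (n + 1), ((2 * n).choose j : ℝ) * (1 + p) ^ j) * (2 * (n:ℝ) + 1) := by
            apply mul_le_mul_of_nonneg_right hmem (by positivity)
    · -- upper bound
      filter_upwards [eventually_ge_atTop 1] with n hn
      apply Real.rpow_le_rpow (by positivity) ?_ (by positivity)
      have hcent : ((2*n).choose n : ℕ) ≤ 4 ^ n := by
        have t : (2 * n).choose n ≤ ∑ i ∈ range (2 * n + 1), (2 * n).choose i :=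
          single_le_sum (fun x _ => Nat.zero_le _) (by simp [Nat.lt_succ_iff]; omega)
        rw [Nat.sum_range_choose] at t
        calc (2*n).choose n ≤ 2 ^ (2*n) := t
          _ = 4 ^ n := by rw [pow_mul]; norm_num
      have hterm : ∀ j ∈ range (n+1), ((2 * n).choose j : ℝ) * (1 + p) ^ j ≤
          (4:ℝ)^n * (1+p)^n := by
        intro j hj
        rw [mem_range, Nat.lt_succ_iff] at hj
        have h1 : ((2 * n).choose j : ℝ) ≤ (4:ℝ)^n := by
          have hm := Nat.choose_le_middle j (2*n)
          rw [show 2*n/2 = n from by omega] at hm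
          exact_mod_cast hm.trans hcent
        have h2 : ((1:ℝ)+p)^j ≤ (1+p)^n := pow_le_pow_right₀ (by linarith) hj
        exact mul_le_mul h1 h2 (by positivity) (by positivity)
      calc ∑ j ∈ range (n + 1), ((2 * n).choose j : ℝ) * (1 + p) ^ j
          ≤ ∑ j ∈ range (n + 1), ((4:ℝ)^n * (1+p)^n) := sum_le_sum hterm
        _ = ((n:ℝ)+1) * ((4:ℝ)^n * (1+p)^n) := by
            rw [sum_const, card_range]; push_cast; ring
        _ = ((n:ℝ)+1) * (4*(1+p))^n := by rw [mul_pow]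
  · -- equality implies p = 0
    intro h
    have : (q - 1)^2 = 0 := by nlinarith
    have hq : q = 1 := by nlinarith [sq_nonneg (q-1)]
    nlinarith
  · rintro rfl
    rw [hqdef]
    norm_num
end

section
/- Let λ > 0 and δλ > 0, and set p = δλ/λ. Define for t > 0: β(t) = e^{−(2λ+δλ)t} · ∑_{n=0}^{∞} ( (λt)^n / n! ) · ∑_{j=0}^{⌊n/2⌋} C(n, j) · (1+p)^j. Then there exists η > 0 such that β(t) ≤ e^{−η t} for all sufficiently large t; in particular β(t) → 0 as t → ∞. (This is the false negative rate at false positive rate 1/2 of the uniformly most powerful rate test applied to a control Poisson process of rate λ and a treatment Poisson process of rate λ + δλ, each observed for time t; thus the false negative rate goes to zero for any false positive rate as the observation time grows.) -/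
open Finset Filter

lemma real_tsum_pow_div_factorial (x : ℝ) :
    ∑' n : ℕ, x ^ n / Nat.factorial n = Real.exp x := by
  rw [Real.exp_eq_exp_ℝ, NormedSpace.exp_eq_tsum_div]

/-- The false negative rate (at false positive rate 1/2) of the uniformly most
powerful rate test comparing a Poisson process of rate `λ` with one of rate
`λ + δλ` (each observed for time `t`) decays exponentially: there is `η > 0` with
`β(t) ≤ e^{−ηt}` for all large `t`; in particular `β(t) → 0` as `t → ∞`. -/
theorem rate_test_fnr_tendsto_zero
    (lam dlam : ℝ) (hlam : 0 < lam) (hdlam : 0 < dlam)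
    (p : ℝ) (hp : p = dlam / lam)
    (beta : ℝ → ℝ)
    (hbeta : ∀ t : ℝ, 0 < t → beta t =
      Real.exp (-((2 * lam + dlam) * t)) *
        ∑' n : ℕ, ((lam * t) ^ n / Nat.factorial n) *
          ∑ j ∈ range (n / 2 + 1), (n.choose j : ℝ) * (1 + p) ^ j) :
    (∃ η : ℝ, 0 < η ∧ ∀ᶠ t in atTop, beta t ≤ Real.exp (-(η * t))) ∧
    Tendsto beta atTop (nhds 0) := by
  have hppos : 0 < p := by rw [hp]; positivity
  set s : ℝ := Real.sqrt (1 + p) with hs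
  have hs1 : 1 ≤ s := by
    have h := Real.sqrt_le_sqrt (show (1:ℝ) ≤ 1 + p by linarith)
    simpa [hs] using h
  have hs2 : s ^ 2 = 1 + p := Real.sq_sqrt (by linarith)
  set c : ℝ := 2 * lam * s with hc
  have hc0 : 0 ≤ c := by positivity
  set η : ℝ := 2 * lam + dlam - c with hη
  have hηpos : 0 < η := by
    have hcsq : c ^ 2 + dlam ^ 2 = (2 * lam + dlam) ^ 2 := by
      have : lam * p = dlam := by rw [hp]; field_simp [hlam.ne']
      rw [hc]; ring_nf; nlinarith [hs2]
    have : c < 2 * lam + dlam := by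
      refine lt_of_pow_lt_pow_left₀ 2 (by linarith) ?_
      nlinarith
    linarith
  -- pointwise bound on the inner sum
  have inner_le : ∀ n : ℕ,
      ∑ j ∈ range (n / 2 + 1), (n.choose j : ℝ) * (1 + p) ^ j ≤ (2 * s) ^ n := by
    intro n
    have h1 : ∀ j ∈ range (n / 2 + 1), (n.choose j : ℝ) * (1 + p) ^ j
        ≤ (n.choose j : ℝ) * s ^ n := by
      intro j hj
      rw [mem_range, Nat.lt_succ_iff] at hj
      have h2j : 2 * j ≤ n := by omega
      have : (1 + p) ^ j = s ^ (2 * j) := by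
        rw [pow_mul, hs2]
      rw [this]
      exact mul_le_mul_of_nonneg_left (pow_le_pow_right₀ hs1 h2j) (by positivity)
    calc ∑ j ∈ range (n / 2 + 1), (n.choose j : ℝ) * (1 + p) ^ j
        ≤ ∑ j ∈ range (n / 2 + 1), (n.choose j : ℝ) * s ^ n := Finset.sum_le_sum h1
      _ = (∑ j ∈ range (n / 2 + 1), (n.choose j : ℝ)) * s ^ n := by
          rw [Finset.sum_mul]
      _ ≤ (∑ j ∈ range (n + 1), (n.choose j : ℝ)) * s ^ n := by
          refine mul_le_mul_of_nonneg_right ?_ (by positivity)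
          refine Finset.sum_le_sum_of_subset_of_nonneg ?_ (fun i _ _ => by positivity)
          exact Finset.range_subset_range.2 (by omega)
      _ = (2 ^ n : ℝ) * s ^ n := by
          norm_cast
          rw [Nat.sum_range_choose]
      _ = (2 * s) ^ n := by rw [mul_pow]
  have inner_nonneg : ∀ n : ℕ,
      0 ≤ ∑ j ∈ range (n / 2 + 1), (n.choose j : ℝ) * (1 + p) ^ j := by
    intro n; refine Finset.sum_nonneg fun j _ => by positivity
  -- main bound for t > 0
  have main : ∀ t : ℝ, 0 < t → beta t ≤ Real.exp (-(η * t)) ∧ 0 ≤ beta t := by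
    intro t ht
    have term_le : ∀ n : ℕ,
        ((lam * t) ^ n / Nat.factorial n) *
          ∑ j ∈ range (n / 2 + 1), (n.choose j : ℝ) * (1 + p) ^ j
        ≤ (c * t) ^ n / Nat.factorial n := by
      intro n
      have := mul_le_mul_of_nonneg_left (inner_le n)
        (show (0:ℝ) ≤ (lam * t) ^ n / Nat.factorial n by positivity)
      calc _ ≤ ((lam * t) ^ n / Nat.factorial n) * (2 * s) ^ n := this
        _ = (c * t) ^ n / Nat.factorial n := by
            rw [div_mul_eq_mul_div, ← mul_pow]
            congr 2
            rw [hc]; ring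
    have term_nonneg : ∀ n : ℕ,
        0 ≤ ((lam * t) ^ n / Nat.factorial n) *
          ∑ j ∈ range (n / 2 + 1), (n.choose j : ℝ) * (1 + p) ^ j := by
      intro n
      exact mul_nonneg (by positivity) (inner_nonneg n)
    have hsum_rhs : Summable (fun n : ℕ => (c * t) ^ n / Nat.factorial n) :=
      Real.summable_pow_div_factorial (c * t)
    have hsum_lhs : Summable (fun n : ℕ => ((lam * t) ^ n / Nat.factorial n) *
        ∑ j ∈ range (n / 2 + 1), (n.choose j : ℝ) * (1 + p) ^ j) :=
      Summable.of_nonneg_of_le term_nonneg term_le hsum_rhs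
    have htsum : (∑' n : ℕ, ((lam * t) ^ n / Nat.factorial n) *
        ∑ j ∈ range (n / 2 + 1), (n.choose j : ℝ) * (1 + p) ^ j)
        ≤ Real.exp (c * t) := by
      rw [← real_tsum_pow_div_factorial (c * t)]
      exact Summable.tsum_le_tsum term_le hsum_lhs hsum_rhs
    have htsum0 : 0 ≤ ∑' n : ℕ, ((lam * t) ^ n / Nat.factorial n) *
        ∑ j ∈ range (n / 2 + 1), (n.choose j : ℝ) * (1 + p) ^ j :=
      tsum_nonneg term_nonneg
    rw [hbeta t ht]
    constructor
    · calc Real.exp (-((2 * lam + dlam) * t)) *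
          (∑' n : ℕ, ((lam * t) ^ n / Nat.factorial n) *
            ∑ j ∈ range (n / 2 + 1), (n.choose j : ℝ) * (1 + p) ^ j)
          ≤ Real.exp (-((2 * lam + dlam) * t)) * Real.exp (c * t) :=
            mul_le_mul_of_nonneg_left htsum (Real.exp_nonneg _)
        _ = Real.exp (-(η * t)) := by
            rw [← Real.exp_add]; congr 1; rw [hη]; ring
    · exact mul_nonneg (Real.exp_nonneg _) htsum0
  refine ⟨⟨η, hηpos, ?_⟩, ?_⟩
  · filter_upwards [eventually_gt_atTop 0] with t ht
    exact (main t ht).1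
  · have hub : ∀ᶠ t in atTop, beta t ≤ Real.exp (-(η * t)) := by
      filter_upwards [eventually_gt_atTop 0] with t ht
      exact (main t ht).1
    have hlb : ∀ᶠ t in atTop, (0:ℝ) ≤ beta t := by
      filter_upwards [eventually_gt_atTop 0] with t ht
      exact (main t ht).2
    have hexp : Tendsto (fun t : ℝ => Real.exp (-(η * t))) atTop (nhds 0) := by
      apply Real.tendsto_exp_atBot.comp
      exact tendsto_neg_atTop_atBot.comp
        ((tendsto_const_mul_atTop_of_pos hηpos).2 tendsto_id)
    exact tendsto_of_tendsto_of_tendsto_of_le_of_le' tendsto_const_nhds hexp hlb hub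
end

section
/- Let N₀ and N₁ be independent ℕ-valued random variables with pmfs f₀ and f₁, let l ≥ 1 be a natural number, and let g₀, g₁ be the pmfs of l·N₀ and l·N₁ (so g_i(j) = f_i(j/l) if l divides j and 0 otherwise). Then for every threshold function K : ℕ → ℕ, ∑_{m=0}^{∞} ∑_{j=0}^{min(l·K(m), l·m)} g₁(j) · g₀(l·m − j) = ∑_{m=0}^{∞} ∑_{k=0}^{min(K(m), m)} f₁(k) · f₀(m − k). Consequently, the false negative rate of the rate test applied to deterministically compounded processes l·N₀, l·N₁ with thresholds scaled by l equals the false negative rate of the rate test applied to N₀, N₁ with thresholds K; i.e., deterministic compounding leaves the false-negative/false-positive trade-off of the rate test exactly unchanged. -/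
open Finset

/-- Deterministic compounding leaves the false-negative/false-positive trade-off of
the rate test unchanged: with `g_i` the pmfs of `l·N_i` (where `N_i` has pmf `f_i`),
the false negative rate of the rate test on the compounded processes with thresholds
scaled by `l` equals that of the rate test on the original processes. -/
theorem deterministic_compounding_same_fnr
    (f0 f1 : ℕ → ℝ) (l : ℕ) (hl : 1 ≤ l)
    (g0 g1 : ℕ → ℝ)
    (hg0 : ∀ j : ℕ, g0 j = if l ∣ j then f0 (j / l) else 0)
    (hg1 : ∀ j : ℕ, g1 j = if l ∣ j then f1 (j / l) else 0)
    (K : ℕ → ℕ) :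
    ∑' m : ℕ, ∑ j ∈ range (min (l * K m) (l * m) + 1), g1 j * g0 (l * m - j)
      = ∑' m : ℕ, ∑ k ∈ range (min (K m) m + 1), f1 k * f0 (m - k) := by
  have hl0 : 0 < l := hl
  refine tsum_congr fun m => ?_
  set M := min (K m) m with hM
  have hmin : min (l * K m) (l * m) = l * M := by
    rw [hM, Nat.mul_min_mul_left]
  rw [hmin]
  have hsub : (range (M + 1)).image (fun k => l * k) ⊆ range (l * M + 1) := by
    intro j hj
    simp only [mem_image, mem_range] at hj ⊢
    obtain ⟨k, hk, rfl⟩ := hj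
    have : k ≤ M := Nat.lt_succ_iff.mp hk
    exact Nat.lt_succ_of_le (Nat.mul_le_mul_left l this)
  have h1 : ∑ j ∈ range (l * M + 1), g1 j * g0 (l * m - j)
      = ∑ j ∈ (range (M + 1)).image (fun k => l * k), g1 j * g0 (l * m - j) := by
    refine (Finset.sum_subset hsub ?_).symm
    intro j hj hj'
    simp only [mem_range] at hj
    by_cases h : l ∣ j
    · obtain ⟨k, rfl⟩ := h
      exfalso
      apply hj'
      simp only [mem_image, mem_range]
      refine ⟨k, ?_, rfl⟩
      have : l * k ≤ l * M := Nat.lt_succ_iff.mp hj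
      exact Nat.lt_succ_of_le (Nat.le_of_mul_le_mul_left this hl0)
    · rw [hg1, if_neg h, zero_mul]
  rw [h1, Finset.sum_image (fun a _ b _ h => Nat.eq_of_mul_eq_mul_left hl0 h)]
  refine Finset.sum_congr rfl fun k hk => ?_
  simp only [mem_range] at hk
  have hkM : k ≤ M := Nat.lt_succ_iff.mp hk
  have hkm : k ≤ m := hkM.trans (min_le_right _ _)
  have hsub' : l * m - l * k = l * (m - k) := by
    rw [Nat.mul_sub]
  rw [hg1, hg0, if_pos ⟨k, rfl⟩, Nat.mul_div_cancel_left k hl0, hsub',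
    if_pos ⟨m - k, rfl⟩, Nat.mul_div_cancel_left _ hl0]
end
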